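/- Let m ≥ 1 and let w_1,…,w_m be weights on ℝ^n such that for some constant C and every ball B, (|B|^{−1}∫_B Π_{k=1}^m w_k^{1/m})^m ≤ C · Π_{k=1}^m essinf_B w_k (the multilinear A_{(1,…,1)} condition). Then there is a constant C′, depending only on C and m, such that: (a) the weight ν = Π_{k=1}^m w_k^{1/m} satisfies |B|^{−1}∫_B ν ≤ C′ · essinf_B ν for every ball B (i.e., ν ∈ A_1); and (b) for each k = 1,…,m, (|B|^{−1}∫_B w_k^{1/m})^m ≤ C′ · essinf_B w_k for every ball B (i.e., w_k^{1/m} ∈ A_1). -/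

import Mathlib

open MeasureTheory Metric ENNReal

noncomputable section

/-- Euclidean space `ℝ^n`. -/
abbrev Rn (n : ℕ) : Type := EuclideanSpace ℝ (Fin n)

/-- A weight on `ℝ^n`: a measurable, everywhere positive, locally integrable function. -/
def IsWeight {n : ℕ} (w : Rn n → ℝ) : Prop :=
  Measurable w ∧ (∀ x, 0 < w x) ∧ LocallyIntegrable w volume

/-- The weighted measure `w(E) = ∫_E w` of a set `E`, as an extended nonnegative real. -/
def wtMass {n : ℕ} (w : Rn n → ℝ) (E : Set (Rn n)) : ℝ≥0∞ :=
  ∫⁻ x in E, ENNReal.ofReal (w x)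

/-- The weighted `L^p` norm of `f` restricted to a set `E`:
`(∫_E |f|^p w)^(1/p)`. -/
def wtLpOn {n : ℕ} (p : ℝ) (w : Rn n → ℝ) (E : Set (Rn n)) (f : Rn n → ℝ) : ℝ≥0∞ :=
  (∫⁻ x in E, ENNReal.ofReal |f x| ^ p * ENNReal.ofReal (w x)) ^ (1 / p)

/-- The weighted `L^p` norm `‖f‖_{L^p(w)}` on all of `ℝ^n`. -/
def wtLp {n : ℕ} (p : ℝ) (w : Rn n → ℝ) (f : Rn n → ℝ) : ℝ≥0∞ :=
  wtLpOn p w Set.univ f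

/-- The weighted weak `L^p` quasinorm of `f` restricted to a set `E`:
`sup_{t>0} t · w({x ∈ E : |f x| > t})^(1/p)`. -/
def wtWLpOn {n : ℕ} (p : ℝ) (w : Rn n → ℝ) (E : Set (Rn n)) (f : Rn n → ℝ) : ℝ≥0∞ :=
  ⨆ (t : ℝ) (_ : 0 < t), ENNReal.ofReal t * wtMass w {x ∈ E | t < |f x|} ^ (1 / p)

/-- The weighted weak `L^p` quasinorm `‖f‖_{WL^p(w)}` on all of `ℝ^n`. -/
def wtWLp {n : ℕ} (p : ℝ) (w : Rn n → ℝ) (f : Rn n → ℝ) : ℝ≥0∞ :=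
  wtWLpOn p w Set.univ f

/-- The weighted amalgam norm `‖f‖_{(L^p,L^q)^α(w;μ)}`. -/
def amalgamNorm {n : ℕ} (p q α : ℝ) (w μ : Rn n → ℝ) (f : Rn n → ℝ) : ℝ≥0∞ :=
  ⨆ (r : ℝ) (_ : 0 < r),
    (∫⁻ y, (wtMass w (ball y r) ^ (1/α - 1/p - 1/q) * wtLpOn p w (ball y r) f) ^ q *
      ENNReal.ofReal (μ y)) ^ (1/q)

/-- The weighted weak amalgam norm `‖f‖_{(WL^p,L^q)^α(w;μ)}`. -/
def wAmalgamNorm {n : ℕ} (p q α : ℝ) (w μ : Rn n → ℝ) (f : Rn n → ℝ) : ℝ≥0∞ :=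
  ⨆ (r : ℝ) (_ : 0 < r),
    (∫⁻ y, (wtMass w (ball y r) ^ (1/α - 1/p - 1/q) * wtWLpOn p w (ball y r) f) ^ q *
      ENNReal.ofReal (μ y)) ^ (1/q)

/-- The product weight `ν_{w⃗} = ∏_k w_k^{p/p_k}`. -/
def nuW {n m : ℕ} (p : ℝ) (pk : Fin m → ℝ) (w : Fin m → Rn n → ℝ) : Rn n → ℝ :=
  fun x => ∏ k, w k x ^ (p / pk k)

/-- The `k`-th factor in the multilinear `A_{P⃗}` condition on a set `B`:
`(|B|⁻¹ ∫_B w^{-p'/p})^{1/p'}` when `p > 1` (note `p'/p = 1/(p-1)` and `1/p' = (p-1)/p`),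
and `(essinf_B w)⁻¹` when `p = 1`. -/
def apFactor {n : ℕ} (pk : ℝ) (w : Rn n → ℝ) (B : Set (Rn n)) : ℝ≥0∞ :=
  if pk = 1 then (essInf (fun x => ENNReal.ofReal (w x)) (volume.restrict B))⁻¹
  else ((volume B)⁻¹ * ∫⁻ x in B, ENNReal.ofReal (w x ^ (-(1 / (pk - 1))))) ^ ((pk - 1) / pk)

/-- The multilinear `A_{P⃗}` condition with constant `CW`. -/
def MultiAP {n m : ℕ} (p : ℝ) (pk : Fin m → ℝ) (w : Fin m → Rn n → ℝ) (CW : ℝ) : Prop :=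
  ∀ (y : Rn n) (r : ℝ), 0 < r →
    ((volume (ball y r))⁻¹ * wtMass (nuW p pk w) (ball y r)) ^ (1/p) *
      (∏ k, apFactor (pk k) (w k) (ball y r)) ≤ ENNReal.ofReal CW

/-- The `A_∞`-comparison condition with constants `Cc`, `δ`. -/
def AinfCompare {n : ℕ} (w : Rn n → ℝ) (Cc δ : ℝ) : Prop :=
  ∀ (y : Rn n) (r : ℝ), 0 < r → ∀ E : Set (Rn n), MeasurableSet E → E ⊆ ball y r →
    wtMass w E ≤ ENNReal.ofReal Cc * (volume E / volume (ball y r)) ^ δ * wtMass w (ball y r)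

/-- Doubling condition with constant `Cd`. -/
def DoublingWt {n : ℕ} (w : Rn n → ℝ) (Cd : ℝ) : Prop :=
  ∀ (y : Rn n) (r : ℝ), 0 < r →
    wtMass w (ball y (2*r)) ≤ ENNReal.ofReal Cd * wtMass w (ball y r)

/-- Reverse Jensen inequality with constant `CJ`. -/
def RevJensen {n : ℕ} (w : Rn n → ℝ) (CJ : ℝ) : Prop :=
  LocallyIntegrable (fun x => Real.log (w x)) volume ∧
  ∀ (y : Rn n) (r : ℝ), 0 < r →
    (∫ x in ball y r, w x) ≤
      CJ * (volume (ball y r)).toReal *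
        Real.exp ((volume (ball y r)).toReal⁻¹ * ∫ x in ball y r, Real.log (w x))

/-- `T` is a.e. `m`-linear. -/
def AEMultilinear {n m : ℕ} (T : (Fin m → Rn n → ℝ) → Rn n → ℝ) : Prop :=
  ∀ g : Fin m → Rn n → ℝ, (∀ k, Measurable (g k)) →
    ∀ (k : Fin m) (c : ℝ) (h : Rn n → ℝ), Measurable h →
      ∀ᵐ x ∂(volume : Measure (Rn n)),
        T (Function.update g k (fun y => c * g k y + h y)) x =
          c * T g x + T (Function.update g k h) x

/-- The complement of the essential support of `g`: the union of all open sets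
on which `g` vanishes almost everywhere. -/
def essSuppCompl {n : ℕ} (g : Rn n → ℝ) : Set (Rn n) :=
  {x | ∃ U : Set (Rn n), IsOpen U ∧ x ∈ U ∧ ∀ᵐ y ∂(volume.restrict U), g y = 0}

/-- The multilinear size property with constant `A`: for a.e. `x` outside the essential
support of one of the entries, `|T(g⃗)(x)|` is dominated by the standard multilinear
fractional kernel applied to `|g_k|`. -/
def SizeProp {n m : ℕ} (T : (Fin m → Rn n → ℝ) → Rn n → ℝ) (A : ℝ) : Prop :=
  ∀ g : Fin m → Rn n → ℝ, (∀ k, Measurable (g k)) → ∀ k₀ : Fin m,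
    ∀ᵐ x ∂(volume.restrict (essSuppCompl (g k₀))),
      ENNReal.ofReal |T g x| ≤ ENNReal.ofReal A *
        ∫⁻ z : Fin m → Rn n,
          (∏ k, ENNReal.ofReal |g k (z k)|) /
            ENNReal.ofReal ((∑ k, dist x (z k)) ^ (m * n))

/-- `b_B`: the average of `b` over the ball `B(y,r)`. -/
def ballAvg {n : ℕ} (b : Rn n → ℝ) (y : Rn n) (r : ℝ) : ℝ :=
  (volume (ball y r)).toReal⁻¹ * ∫ x in ball y r, b x

/-- The BMO seminorm of `b` is bounded by `M`. -/
def BMOBound {n : ℕ} (b : Rn n → ℝ) (M : ℝ) : Prop :=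
  ∀ (y : Rn n) (r : ℝ), 0 < r →
    (volume (ball y r)).toReal⁻¹ * (∫ x in ball y r, |b x - ballAvg b y r|) ≤ M

/-- The commutator `[b,T]_k` in the `k`-th slot. -/
def commAt {n m : ℕ} (b : Rn n → ℝ) (k : Fin m)
    (T : (Fin m → Rn n → ℝ) → Rn n → ℝ) : (Fin m → Rn n → ℝ) → Rn n → ℝ :=
  fun f x => b x * T f x - T (Function.update f k (fun y => b y * f k y)) x

/-- The multilinear commutator `[Σb⃗, T] = Σ_k [b_k,T]_k`. -/
def sumComm {n m : ℕ} (b : Fin m → Rn n → ℝ)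
    (T : (Fin m → Rn n → ℝ) → Rn n → ℝ) : (Fin m → Rn n → ℝ) → Rn n → ℝ :=
  fun f x => ∑ k, commAt (b k) k T f x

/-- The iterated commutator `[Πb⃗, T] = [b_1,[b_2,…[b_{m-1},[b_m,T]_m]_{m-1}…]_2]_1`. -/
def iterComm {n m : ℕ} (b : Fin m → Rn n → ℝ)
    (T : (Fin m → Rn n → ℝ) → Rn n → ℝ) : (Fin m → Rn n → ℝ) → Rn n → ℝ :=
  (List.finRange m).foldr (fun k S => commAt (b k) k S) T

/-- `Φ(t) = t(1 + log⁺ t)`. -/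
def phiLL (t : ℝ) : ℝ := t * (1 + max (Real.log t) 0)

/-- The `L log L` Luxemburg norm of `f` over `B` with respect to the weight `w`:
`inf {σ > 0 : w(B)⁻¹ ∫_B Φ(|f|/σ) w ≤ 1}` (equal to `⊤` if no such `σ` exists). -/
def llogLOn {n : ℕ} (w : Rn n → ℝ) (B : Set (Rn n)) (f : Rn n → ℝ) : ℝ≥0∞ :=
  sInf {σ : ℝ≥0∞ | ∃ s : ℝ, 0 < s ∧ σ = ENNReal.ofReal s ∧
    (wtMass w B)⁻¹ *
      (∫⁻ x in B, ENNReal.ofReal (phiLL (|f x| / s)) * ENNReal.ofReal (w x)) ≤ 1}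

/-- The weighted amalgam norm of `L log L` type, `‖f‖_{(L log L, L^q)^α(w;μ)}`. -/
def llogLAmalgam {n : ℕ} (q α : ℝ) (w μ : Rn n → ℝ) (f : Rn n → ℝ) : ℝ≥0∞ :=
  ⨆ (r : ℝ) (_ : 0 < r),
    (∫⁻ y, (wtMass w (ball y r) ^ (1/α - 1/q) * llogLOn w (ball y r) f) ^ q *
      ENNReal.ofReal (μ y)) ^ (1/q)

/-- Reverse Hölder inequality with exponent `s` and constant `CR`. -/
def RevHolder {n : ℕ} (w : Rn n → ℝ) (s CR : ℝ) : Prop :=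
  ∀ (y : Rn n) (r : ℝ), 0 < r →
    ((volume (ball y r))⁻¹ * ∫⁻ x in ball y r, ENNReal.ofReal (w x ^ s)) ^ (1/s) ≤
      ENNReal.ofReal CR * ((volume (ball y r))⁻¹ * wtMass w (ball y r))

/-- the multilinear `A_{(1,…,1)}` condition implies `ν = ∏_k w_k^{1/m} ∈ A_1`
and `w_k^{1/m} ∈ A_1` for each `k`, with a constant depending only on `C` and `m`. -/
theorem multiA1_implies_A1
    {n m : ℕ} (hm : 1 ≤ m)
    (w : Fin m → Rn n → ℝ) (hw : ∀ k, IsWeight (w k)) (C : ℝ)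
    (hA : ∀ (y : Rn n) (r : ℝ), 0 < r →
      ((volume (ball y r))⁻¹ *
          ∫⁻ x in ball y r, ENNReal.ofReal (∏ k, w k x ^ ((1:ℝ)/(m:ℝ)))) ^ (m:ℕ)
        ≤ ENNReal.ofReal C *
            ∏ k, essInf (fun x => ENNReal.ofReal (w k x)) (volume.restrict (ball y r))) :
    ∃ C' : ℝ, 0 < C' ∧
      (∀ (y : Rn n) (r : ℝ), 0 < r →
        (volume (ball y r))⁻¹ *
            (∫⁻ x in ball y r, ENNReal.ofReal (∏ k, w k x ^ ((1:ℝ)/(m:ℝ)))) ≤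
          ENNReal.ofReal C' *
            essInf (fun x => ENNReal.ofReal (∏ k, w k x ^ ((1:ℝ)/(m:ℝ))))
              (volume.restrict (ball y r))) ∧
      (∀ k, ∀ (y : Rn n) (r : ℝ), 0 < r →
        ((volume (ball y r))⁻¹ *
            ∫⁻ x in ball y r, ENNReal.ofReal (w k x ^ ((1:ℝ)/(m:ℝ)))) ^ (m:ℕ) ≤
          ENNReal.ofReal C' *
            essInf (fun x => ENNReal.ofReal (w k x)) (volume.restrict (ball y r))) := by
  have hm0 : (0:ℝ) < (m:ℝ) := by exact_mod_cast hm
  have hmne : (m:ℝ) ≠ 0 := hm0.ne'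
  have hνmeas : Measurable fun x : Rn n => ENNReal.ofReal (∏ k, w k x ^ ((1:ℝ)/(m:ℝ))) := by
    apply Measurable.ennreal_ofReal
    exact Finset.measurable_prod _ fun k _ =>
      (Real.continuous_rpow_const (by positivity)).measurable.comp (hw k).1
  have hνpos : ∀ x, 0 < ∏ k, w k x ^ ((1:ℝ)/(m:ℝ)) := fun x =>
    Finset.prod_pos fun k _ => Real.rpow_pos_of_pos ((hw k).2.1 x) _
  have hν_eq : ∀ x, ENNReal.ofReal (∏ k, w k x ^ ((1:ℝ)/(m:ℝ)))
      = ∏ k, (ENNReal.ofReal (w k x)) ^ ((1:ℝ)/(m:ℝ)) := by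
    intro x
    rw [ENNReal.ofReal_prod_of_nonneg fun k _ =>
      (Real.rpow_pos_of_pos ((hw k).2.1 x) _).le]
    exact Finset.prod_congr rfl fun k _ =>
      (ENNReal.ofReal_rpow_of_pos ((hw k).2.1 x)).symm
  have hroot : ∀ a : ℝ≥0∞, (a ^ (m:ℕ)) ^ ((1:ℝ)/(m:ℝ)) = a := by
    intro a
    rw [← ENNReal.rpow_natCast, ← ENNReal.rpow_mul, mul_one_div, div_self hmne,
      ENNReal.rpow_one]
  have hroot' : ∀ a : ℝ≥0∞, (a ^ ((1:ℝ)/(m:ℝ))) ^ (m:ℕ) = a := by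
    intro a
    rw [← ENNReal.rpow_natCast, ← ENNReal.rpow_mul, one_div,
      inv_mul_cancel₀ hmne, ENNReal.rpow_one]
  -- positivity and finiteness of the essential infima
  have hne : ∀ (y : Rn n) (r : ℝ), 0 < r → (volume.restrict (ball y r) : Measure (Rn n)) ≠ 0 := by
    intro y r hr h0
    have := (measure_ball_pos volume y hr).ne'
    rw [Measure.restrict_eq_zero] at h0
    exact this h0
  have efin : ∀ (y : Rn n) (r : ℝ), 0 < r → ∀ k,
      essInf (fun x => ENNReal.ofReal (w k x)) (volume.restrict (ball y r)) ≠ ⊤ := by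
    intro y r hr k
    haveI : (ae (volume.restrict (ball y r))).NeBot :=
      ae_neBot.mpr (hne y r hr)
    obtain ⟨x, hx⟩ := (ae_essInf_le
      (f := fun x => ENNReal.ofReal (w k x)) (μ := volume.restrict (ball y r))).exists
    exact (lt_of_le_of_lt hx ENNReal.ofReal_lt_top).ne
  have epos : ∀ (y : Rn n) (r : ℝ), 0 < r → ∀ k,
      essInf (fun x => ENNReal.ofReal (w k x)) (volume.restrict (ball y r)) ≠ 0 := by
    intro y r hr k hk0
    have h1 := hA y r hr
    have hP0 : (∏ j, essInf (fun x => ENNReal.ofReal (w j x))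
        (volume.restrict (ball y r))) = 0 :=
      Finset.prod_eq_zero (Finset.mem_univ k) hk0
    rw [hP0, mul_zero, nonpos_iff_eq_zero, pow_eq_zero_iff (by omega : m ≠ 0),
      mul_eq_zero] at h1
    have hVinv : (volume (ball y r))⁻¹ ≠ 0 := ENNReal.inv_ne_zero.mpr measure_ball_lt_top.ne
    have hI0 : (∫⁻ x in ball y r, ENNReal.ofReal (∏ j, w j x ^ ((1:ℝ)/(m:ℝ)))) = 0 :=
      h1.resolve_left hVinv
    rw [lintegral_eq_zero_iff hνmeas] at hI0
    haveI : (ae (volume.restrict (ball y r))).NeBot :=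
      ae_neBot.mpr (hne y r hr)
    obtain ⟨x, hx⟩ := hI0.exists
    refine absurd hx ?_
    simp only [Pi.zero_apply, ENNReal.ofReal_eq_zero, not_le]
    exact hνpos x
  refine ⟨max C 1, lt_of_lt_of_le one_pos (le_max_right _ _), ?_, ?_⟩
  · -- part (a)
    intro y r hr
    set B := ball y r
    set eI := fun k : Fin m => essInf (fun x => ENNReal.ofReal (w k x))
      (volume.restrict B) with heI
    have hae : ∀ᵐ x ∂(volume.restrict B), ∀ k, eI k ≤ ENNReal.ofReal (w k x) :=
      ae_all_iff.mpr fun k => ae_essInf_le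
    have hEI : (∏ k, (eI k) ^ ((1:ℝ)/(m:ℝ))) ≤
        essInf (fun x => ENNReal.ofReal (∏ k, w k x ^ ((1:ℝ)/(m:ℝ))))
          (volume.restrict B) := by
      refine le_essInf_of_ae_le _ (hae.mono fun x hx => ?_)
      dsimp only
      rw [hν_eq]
      exact Finset.prod_le_prod' fun k _ =>
        ENNReal.rpow_le_rpow (hx k) (by positivity)
    have h2 : (∏ k, eI k) ≤
        (essInf (fun x => ENNReal.ofReal (∏ k, w k x ^ ((1:ℝ)/(m:ℝ))))
          (volume.restrict B)) ^ (m:ℕ) := by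
      calc (∏ k, eI k) = (∏ k, (eI k) ^ ((1:ℝ)/(m:ℝ))) ^ (m:ℕ) := by
            rw [← Finset.prod_pow]
            exact (Finset.prod_congr rfl fun k _ => hroot' (eI k)).symm
        _ ≤ _ := pow_le_pow_left₀ zero_le hEI _
    have h1 := (hA y r hr).trans (mul_le_mul_right h2 _)
    have hCroot : (ENNReal.ofReal C) ^ ((1:ℝ)/(m:ℝ)) ≤ ENNReal.ofReal (max C 1) := by
      rcases le_total C 1 with hC | hC
      · refine (ENNReal.rpow_le_one (ENNReal.ofReal_le_one.mpr hC) (by positivity)).trans ?_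
        exact ENNReal.one_le_ofReal.mpr (le_max_right _ _)
      · calc (ENNReal.ofReal C) ^ ((1:ℝ)/(m:ℝ)) ≤ (ENNReal.ofReal C) ^ (1:ℝ) :=
              ENNReal.rpow_le_rpow_of_exponent_le (ENNReal.one_le_ofReal.mpr hC)
                (by rw [div_le_one hm0]; exact_mod_cast hm)
          _ = ENNReal.ofReal C := ENNReal.rpow_one _
          _ ≤ ENNReal.ofReal (max C 1) := ENNReal.ofReal_le_ofReal (le_max_left _ _)
    calc (volume B)⁻¹ * ∫⁻ x in B, ENNReal.ofReal (∏ k, w k x ^ ((1:ℝ)/(m:ℝ)))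
        = (((volume B)⁻¹ * ∫⁻ x in B, ENNReal.ofReal (∏ k, w k x ^ ((1:ℝ)/(m:ℝ)))) ^ (m:ℕ))
            ^ ((1:ℝ)/(m:ℝ)) := (hroot _).symm
      _ ≤ (ENNReal.ofReal C *
            (essInf (fun x => ENNReal.ofReal (∏ k, w k x ^ ((1:ℝ)/(m:ℝ))))
              (volume.restrict B)) ^ (m:ℕ)) ^ ((1:ℝ)/(m:ℝ)) :=
          ENNReal.rpow_le_rpow h1 (by positivity)
      _ = (ENNReal.ofReal C) ^ ((1:ℝ)/(m:ℝ)) *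
            essInf (fun x => ENNReal.ofReal (∏ k, w k x ^ ((1:ℝ)/(m:ℝ))))
              (volume.restrict B) := by
          rw [ENNReal.mul_rpow_of_nonneg _ _ (by positivity), hroot]
      _ ≤ ENNReal.ofReal (max C 1) *
            essInf (fun x => ENNReal.ofReal (∏ k, w k x ^ ((1:ℝ)/(m:ℝ))))
              (volume.restrict B) := mul_le_mul_left hCroot _
  · -- part (b)
    intro k y r hr
    set B := ball y r
    set eI := fun j : Fin m => essInf (fun x => ENNReal.ofReal (w j x))
      (volume.restrict B) with heI
    have hae : ∀ᵐ x ∂(volume.restrict B), ∀ j, eI j ≤ ENNReal.ofReal (w j x) :=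
      ae_all_iff.mpr fun j => ae_essInf_le
    set Q : ℝ≥0∞ := ∏ j ∈ Finset.univ.erase k, (eI j) ^ ((1:ℝ)/(m:ℝ)) with hQ
    have hfkmeas : Measurable fun x : Rn n => ENNReal.ofReal (w k x ^ ((1:ℝ)/(m:ℝ))) :=
      Measurable.ennreal_ofReal
        ((Real.continuous_rpow_const (by positivity)).measurable.comp (hw k).1)
    have hpt : ∀ᵐ x ∂(volume.restrict B),
        ENNReal.ofReal (w k x ^ ((1:ℝ)/(m:ℝ))) * Q ≤
          ENNReal.ofReal (∏ j, w j x ^ ((1:ℝ)/(m:ℝ))) := by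
      refine hae.mono fun x hx => ?_
      rw [hν_eq, ← Finset.mul_prod_erase Finset.univ _ (Finset.mem_univ k),
        ← ENNReal.ofReal_rpow_of_pos ((hw k).2.1 x)]
      refine mul_le_mul_right ?_ _
      exact Finset.prod_le_prod' fun j _ => ENNReal.rpow_le_rpow (hx j) (by positivity)
    have hb1 : (∫⁻ x in B, ENNReal.ofReal (w k x ^ ((1:ℝ)/(m:ℝ)))) * Q ≤
        ∫⁻ x in B, ENNReal.ofReal (∏ j, w j x ^ ((1:ℝ)/(m:ℝ))) := by
      rw [← lintegral_mul_const _ hfkmeas]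
      exact lintegral_mono_ae hpt
    have hb2 : ((volume B)⁻¹ * ∫⁻ x in B, ENNReal.ofReal (w k x ^ ((1:ℝ)/(m:ℝ)))) * Q ≤
        (volume B)⁻¹ * ∫⁻ x in B, ENNReal.ofReal (∏ j, w j x ^ ((1:ℝ)/(m:ℝ))) := by
      rw [mul_assoc]
      exact mul_le_mul_right hb1 _
    set P : ℝ≥0∞ := ∏ j ∈ Finset.univ.erase k, eI j with hP
    have hQP : Q ^ (m:ℕ) = P := by
      rw [hQ, ← Finset.prod_pow]
      exact Finset.prod_congr rfl fun j _ => hroot' (eI j)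
    have hb3 : ((volume B)⁻¹ * ∫⁻ x in B, ENNReal.ofReal (w k x ^ ((1:ℝ)/(m:ℝ)))) ^ (m:ℕ)
        * P ≤ (ENNReal.ofReal C * eI k) * P := by
      calc ((volume B)⁻¹ * ∫⁻ x in B, ENNReal.ofReal (w k x ^ ((1:ℝ)/(m:ℝ)))) ^ (m:ℕ) * P
          = (((volume B)⁻¹ * ∫⁻ x in B, ENNReal.ofReal (w k x ^ ((1:ℝ)/(m:ℝ)))) * Q)
              ^ (m:ℕ) := by rw [← hQP, ← mul_pow]
        _ ≤ ((volume B)⁻¹ *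
              ∫⁻ x in B, ENNReal.ofReal (∏ j, w j x ^ ((1:ℝ)/(m:ℝ)))) ^ (m:ℕ) :=
            pow_le_pow_left₀ zero_le hb2 _
        _ ≤ ENNReal.ofReal C * ∏ j, eI j := hA y r hr
        _ = (ENNReal.ofReal C * eI k) * P := by
            rw [← Finset.mul_prod_erase Finset.univ _ (Finset.mem_univ k), ← mul_assoc]
    have hPne0 : P ≠ 0 := by
      rw [hP, Finset.prod_ne_zero_iff]
      exact fun j _ => epos y r hr j
    have hPnetop : P ≠ ⊤ := ENNReal.prod_ne_top fun j _ => efin y r hr j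
    have hb4 : ((volume B)⁻¹ *
        ∫⁻ x in B, ENNReal.ofReal (w k x ^ ((1:ℝ)/(m:ℝ)))) ^ (m:ℕ) ≤
        ENNReal.ofReal C * eI k :=
      (ENNReal.mul_le_mul_iff_left hPne0 hPnetop).mp hb3
    exact hb4.trans (mul_le_mul_left
      (ENNReal.ofReal_le_ofReal (le_max_left _ _)) _)
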